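/- Let g = ⊕_{j∈(1/2)Z} g_j be a finite-dimensional graded Lie algebra over a field of characteristic 0, with non-degenerate invariant symmetric bilinear form (.|.), and f ∈ g_{-1}. Define the bilinear form <a,b> = (f | [a,b]) on g_{1/2}. Then <.,.> is skew-symmetric, and it is non-degenerate if and only if ad f : g_{1/2} → g_{-1/2} is an isomorphism. -/

import Mathlib

section Aux

variable {F L : Type*} [Field F] [LieRing L] [LieAlgebra F L]

/-- The pairing between `g i` and `g (-i)` is nondegenerate on the left. -/
lemma aux_pair (g : ℚ → Submodule F L) (hInt : DirectSum.IsInternal g)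
    (B : L →ₗ[F] L →ₗ[F] F)
    (hnd : ∀ x, (∀ y, B x y = 0) → x = 0)
    (hcompat : ∀ (i j : ℚ), i + j ≠ 0 → ∀ x ∈ g i, ∀ y ∈ g j, B x y = 0)
    (i : ℚ) (x : L) (hx : x ∈ g i) (h : ∀ y ∈ g (-i), B x y = 0) : x = 0 := by
  apply hnd
  intro y
  have hy : y ∈ ⨆ j, g j := by
    rw [hInt.submodule_iSup_eq_top]; trivial
  refine Submodule.iSup_induction g (motive := fun y => B x y = 0) hy ?_ (by simp) ?_
  · intro j z hz
    by_cases hij : i + j = 0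
    · exact h z (by rwa [show -i = j by linarith])
    · exact hcompat i j hij x hx z hz
  · intro a b ha hb; rw [map_add, ha, hb, add_zero]

lemma aux_finrank (g : ℚ → Submodule F L) [FiniteDimensional F L]
    (hInt : DirectSum.IsInternal g)
    (B : L →ₗ[F] L →ₗ[F] F)
    (hnd : ∀ x, (∀ y, B x y = 0) → x = 0)
    (hcompat : ∀ (i j : ℚ), i + j ≠ 0 → ∀ x ∈ g i, ∀ y ∈ g j, B x y = 0)
    (i : ℚ) : Module.finrank F (g i) ≤ Module.finrank F (g (-i)) := by
  let φ : g i →ₗ[F] Module.Dual F (g (-i)) :=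
    (B.domRestrict (g i)).compl₂ (g (-i)).subtype
  have hφ : Function.Injective φ := by
    intro a b hab
    rw [← sub_eq_zero]
    have h0 : φ (a - b) = 0 := by rw [map_sub, hab, sub_self]
    ext
    refine aux_pair g hInt B hnd hcompat i _ (a - b).2 fun y hy => ?_
    have := congrArg (fun ψ : Module.Dual F (g (-i)) => ψ ⟨y, hy⟩) h0
    simpa [φ] using this
  calc Module.finrank F (g i) ≤ Module.finrank F (Module.Dual F (g (-i))) :=
        LinearMap.finrank_le_finrank_of_injective hφ
    _ = Module.finrank F (g (-i)) := Subspace.dual_finrank_eq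

end Aux

/-- the bilinear form `<a,b> = (f | [a,b])` on `g_{1/2}` is
skew-symmetric, and it is non-degenerate on `g_{1/2}` if and only if
`ad f : g_{1/2} → g_{-1/2}` is an isomorphism. -/
theorem stmt7 {F L : Type*} [Field F] [CharZero F] [LieRing L] [LieAlgebra F L]
    [FiniteDimensional F L]
    (g : ℚ → Submodule F L) (hInt : DirectSum.IsInternal g)
    (hbr : ∀ (i j : ℚ), ∀ x ∈ g i, ∀ y ∈ g j, ⁅x, y⁆ ∈ g (i + j))
    (B : L →ₗ[F] L →ₗ[F] F)
    (hsymm : ∀ x y, B x y = B y x)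
    (hinv : ∀ x y z, B ⁅x, y⁆ z = B x ⁅y, z⁆)
    (hnd : ∀ x, (∀ y, B x y = 0) → x = 0)
    (hcompat : ∀ (i j : ℚ), i + j ≠ 0 → ∀ x ∈ g i, ∀ y ∈ g j, B x y = 0)
    (f : L) (hf : f ∈ g (-1)) :
    (∀ a ∈ g (1/2 : ℚ), ∀ b ∈ g (1/2 : ℚ), B f ⁅a, b⁆ = - B f ⁅b, a⁆) ∧
    ∀ hmap : ∀ a ∈ g (1/2 : ℚ), (LieAlgebra.ad F L f) a ∈ g (-(1/2) : ℚ),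
      ((∀ a ∈ g (1/2 : ℚ), (∀ b ∈ g (1/2 : ℚ), B f ⁅a, b⁆ = 0) → a = 0) ↔
        Function.Bijective ((LieAlgebra.ad F L f).restrict hmap)) := by
  have key : ∀ a b : L, B f ⁅a, b⁆ = B ⁅f, a⁆ b := fun a b => (hinv f a b).symm
  constructor
  · intro a _ b _
    rw [← lie_skew b a, map_neg, neg_neg]
  · intro hmap
    constructor
    · -- nondegenerate → bijective
      intro hN
      set T := (LieAlgebra.ad F L f).restrict hmap with hT
      have hinj : Function.Injective T := by
        intro a b hab
        rw [← sub_eq_zero]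
        have h0 : T (a - b) = 0 := by rw [map_sub, hab, sub_self]
        have hval : ⁅f, ((a - b : g (1/2 : ℚ)) : L)⁆ = 0 := by
          have := congrArg Subtype.val h0
          simpa [T, LinearMap.restrict_apply, LieAlgebra.ad_apply] using this
        ext
        refine hN _ (a - b).2 fun c hc => ?_
        rw [key, hval, map_zero, LinearMap.zero_apply]
      have hdim : Module.finrank F (g (1/2 : ℚ)) = Module.finrank F (g (-(1/2) : ℚ)) := by
        have h1 := aux_finrank g hInt B hnd hcompat (1/2 : ℚ)
        have h2 := aux_finrank g hInt B hnd hcompat (-(1/2) : ℚ)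
        rw [neg_neg] at h2
        exact le_antisymm h1 h2
      exact ⟨hinj, (LinearMap.injective_iff_surjective_of_finrank_eq_finrank hdim).mp hinj⟩
    · -- bijective → nondegenerate
      intro hB a ha h
      have hfa : ⁅f, a⁆ ∈ g (-(1/2) : ℚ) := by
        have := hmap a ha
        rwa [LieAlgebra.ad_apply] at this
      have hfa0 : ⁅f, a⁆ = 0 := by
        refine aux_pair g hInt B hnd hcompat (-(1/2) : ℚ) _ hfa fun y hy => ?_
        rw [← key]
        exact h y (by rwa [neg_neg] at hy)
      have : (LieAlgebra.ad F L f).restrict hmap ⟨a, ha⟩ = 0 := by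
        ext
        simpa [LinearMap.restrict_apply, LieAlgebra.ad_apply] using hfa0
      have := hB.injective (by rw [this, map_zero] :
        (LieAlgebra.ad F L f).restrict hmap ⟨a, ha⟩ = (LieAlgebra.ad F L f).restrict hmap 0)
      exact congrArg Subtype.val this
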